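/- γ(1/2) = 2·log(2/σ), where σ = ∏_{n=1}^∞ n^{1/2^n} is Somos's quadratic recurrence constant and γ(z) = ∑_{n=1}^∞ z^{n-1}(1/n − log((n+1)/n)). -/

import Mathlib

/-- `γ(1/2) = 2·log(2/σ)`, where `σ` is Somos's quadratic recurrence constant. -/
theorem stmt_13 (σ : ℝ) (hσpos : 0 < σ)
    (hσ : HasSum (fun n : ℕ => Real.log (n + 1) / 2 ^ (n + 1)) (Real.log σ)) :
    (∑' n : ℕ, (1 / 2 : ℝ) ^ n * (1 / (n + 1) - Real.log ((n + 2) / (n + 1))))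
      = 2 * Real.log (2 / σ) := by
  -- Sum 1: ∑ (1/2)^n / (n+1) = 2 log 2
  have h1 : HasSum (fun n : ℕ => (1 / 2 : ℝ) ^ n * (1 / (n + 1))) (2 * Real.log 2) := by
    have := (Real.hasSum_pow_div_log_of_abs_lt_one (x := (1/2 : ℝ)) (by rw [abs_of_pos] <;> norm_num)).mul_left 2
    have e : -Real.log (1 - 1/2) = Real.log 2 := by
      rw [show (1 - 1/2 : ℝ) = 2⁻¹ by norm_num, Real.log_inv]; ring
    rw [e] at this
    convert this using 2 with n
    · rfl
    rw [pow_succ]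
    ring
  -- Sum 3: ∑ (1/2)^n log(n+1) = 2 log σ
  have h3 : HasSum (fun n : ℕ => (1 / 2 : ℝ) ^ n * Real.log (n + 1)) (2 * Real.log σ) := by
    have := hσ.mul_left 2
    convert this using 2 with n
    · rfl
    rw [div_pow, one_pow, pow_succ]
    ring
  -- Sum 2: ∑ (1/2)^n log(n+2) = 4 log σ
  have h2 : HasSum (fun n : ℕ => (1 / 2 : ℝ) ^ n * Real.log (n + 2)) (4 * Real.log σ) := by
    have hshift : HasSum (fun n : ℕ => Real.log (n + 2) / 2 ^ (n + 2)) (Real.log σ) := by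
      have := (hasSum_nat_add_iff (f := fun n : ℕ => Real.log (n + 1) / 2 ^ (n + 1)) (g := Real.log σ) 1).2 ?_
      · convert this using 2 with n
        · rfl
        push_cast
        ring_nf
      · convert hσ using 1
        · rfl
        simp
    have := hshift.mul_left 4
    convert this using 2 with n
    · rfl
    rw [div_pow, one_pow, pow_succ, pow_succ]
    ring
  have hmain : HasSum (fun n : ℕ => (1 / 2 : ℝ) ^ n * (1 / (n + 1) - Real.log ((n + 2) / (n + 1))))
      (2 * Real.log 2 - (4 * Real.log σ - 2 * Real.log σ)) := by
    have := h1.sub (h2.sub h3)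
    convert this using 2 with n
    · rfl
    have hn1 : (0:ℝ) < n + 1 := by positivity
    have hn2 : (0:ℝ) < n + 2 := by positivity
    rw [Real.log_div (ne_of_gt hn2) (ne_of_gt hn1)]
    ring
  rw [hmain.tsum_eq, Real.log_div (by norm_num) (ne_of_gt hσpos)]
  ring
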